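/- Let D be a dihedral group of order 2^{k+1} with k ≥ 2. Then the outer automorphism group Out(D) is isomorphic to C₂ × C_{2^{k-2}}. -/

import Mathlib

namespace Stmt2Aux

lemma five_pow_int (j : ℕ) : ∃ c : ℤ, (5:ℤ)^(2^j) = 1 + 4*2^j + 8*2^j*c := by
  induction j with
  | zero => exact ⟨0, by norm_num⟩
  | succ j ih =>
    obtain ⟨c, hc⟩ := ih
    refine ⟨c + 2^j * (1 + 2*c)^2, ?_⟩
    have h2 : (5:ℤ)^(2^(j+1)) = ((5:ℤ)^(2^j))^2 := by
      rw [pow_succ, pow_mul]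
    rw [h2, hc, pow_succ]
    ring

lemma five_pow_zmod (k : ℕ) (hk : 3 ≤ k) :
    (5 : ZMod (2^k))^(2^(k-3)) = 1 + 2^(k-1) := by
  obtain ⟨j, rfl⟩ : ∃ j, k = j + 3 := ⟨k - 3, by omega⟩
  obtain ⟨c, hc⟩ := five_pow_int j
  have key : (((5:ℤ)^(2^j) : ℤ) : ZMod (2^(j+3))) = ((1 + 4*2^j + 8*2^j*c : ℤ) : ZMod (2^(j+3))) := by
    exact_mod_cast congrArg (Int.cast : ℤ → ZMod (2^(j+3))) hc
  have h8 : ((8 * 2^j * c : ℤ) : ZMod (2^(j+3))) = 0 := by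
    have hd : ((2:ℤ)^(j+3)) ∣ 8 * 2^j * c := ⟨c, by ring⟩
    have : ((2^(j+3) : ℕ) : ℤ) ∣ 8 * 2^j * c := by push_cast; exact hd
    exact (ZMod.intCast_zmod_eq_zero_iff_dvd _ _).mpr this
  have key2 : (5 : ZMod (2^(j+3)))^(2^j) = 1 + 4*2^j := by
    have := key
    push_cast at this h8 ⊢
    rw [this, h8, add_zero]
  have hrw : j + 3 - 3 = j := rfl
  have hrw2 : j + 3 - 1 = j + 2 := rfl
  rw [hrw, hrw2, key2]
  congr 1
  rw [pow_succ, pow_succ]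
  ring

lemma five_pow_one (k : ℕ) (hk : 2 ≤ k) :
    (5 : ZMod (2^k))^(2^(k-2)) = 1 := by
  rcases eq_or_lt_of_le hk with h | h
  · subst_vars
    decide
  · have hk3 : 3 ≤ k := h
    have h1 : k - 2 = (k-3) + 1 := by omega
    rw [h1, pow_succ, pow_mul, five_pow_zmod k hk3]
    have h2 : ((1:ZMod (2^k)) + 2^(k-1))^2 = 1 + 2^(k-1)*2 + (2^(k-1))^2 := by ring
    rw [h2]
    have e1 : (2:ZMod (2^k))^(k-1)*2 = 2^k := by
      rw [← pow_succ]; congr 1; omega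
    have e2 : ((2:ZMod (2^k))^(k-1))^2 = 2^k * 2^(k-2) := by
      rw [← pow_mul, ← pow_add]; congr 1; omega
    have hz : (2:ZMod (2^k))^k = 0 := by
      have : ((2^k : ℕ) : ZMod (2^k)) = 0 := ZMod.natCast_self _
      push_cast at this; exact this
    rw [e1, e2, hz, zero_mul, add_zero, add_zero]

lemma five_pow_ne_one (k : ℕ) (hk : 3 ≤ k) :
    (5 : ZMod (2^k))^(2^(k-3)) ≠ 1 := by
  rw [five_pow_zmod k hk]
  intro h
  have h2 : (2:ZMod (2^k))^(k-1) = 0 := by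
    have := sub_eq_zero.mpr h.symm
    simpa using this.symm
  have h3 : ((2^(k-1) : ℕ) : ZMod (2^k)) = 0 := by push_cast; exact h2
  rw [ZMod.natCast_eq_zero_iff] at h3
  have := Nat.le_of_dvd (by positivity) h3
  have := Nat.pow_lt_pow_right (a := 2) one_lt_two (show k - 1 < k by omega)
  omega

lemma five_pow_ne_neg_one (k : ℕ) (hk : 2 ≤ k) (t : ℕ) :
    (5 : ZMod (2^k))^t ≠ -1 := by
  intro h
  have h4 : (4:ℕ) ∣ 2^k := by
    have : (2:ℕ)^2 ∣ 2^k := pow_dvd_pow 2 hk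
    simpa using this
  let c : ZMod (2^k) →+* ZMod 4 := ZMod.castHom h4 (ZMod 4)
  have := congrArg c h
  rw [map_pow, map_neg, map_one] at this
  have h5 : c 5 = 1 := by
    have : c 5 = ((5:ℕ) : ZMod 4) := by
      have : ((5:ℕ) : ZMod (2^k)) = (5 : ZMod (2^k)) := by push_cast; ring
      rw [← this, map_natCast]
    rw [this]; decide
  rw [h5, one_pow] at this
  revert this; decide

end Stmt2Aux

namespace Stmt2Aux

lemma orderOf_five (k : ℕ) (hk : 2 ≤ k) : orderOf (5 : ZMod (2^k)) = 2^(k-2) := by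
  haveI : NeZero (2^k) := ⟨pow_ne_zero _ two_ne_zero⟩
  have hdvd : orderOf (5 : ZMod (2^k)) ∣ 2^(k-2) :=
    orderOf_dvd_of_pow_eq_one (five_pow_one k hk)
  obtain ⟨j, hj, hord⟩ := (Nat.dvd_prime_pow Nat.prime_two).mp hdvd
  rcases eq_or_lt_of_le hk with h | h
  · subst h
    have : j = 0 := by omega
    subst this
    rw [hord]
  · have hk3 : 3 ≤ k := h
    by_contra hne
    have hjlt : j ≤ k - 3 := by
      rcases Nat.lt_or_ge j (k-2) with h' | h'
      · omega
      · exfalso; apply hne; rw [hord]; congr 1; omega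
    have : orderOf (5 : ZMod (2^k)) ∣ 2^(k-3) := hord ▸ pow_dvd_pow 2 hjlt
    exact five_pow_ne_one k hk3 (orderOf_dvd_iff_pow_eq_one.mp this)

lemma exists_psi (k : ℕ) (hk : 2 ≤ k) :
    ∃ ψ : (ZMod (2^k))ˣ →* Multiplicative (ZMod (2^(k-2))),
      Function.Surjective ψ ∧ ∀ a, (ψ a = 1 ↔ a = 1 ∨ a = -1) := by
  haveI : NeZero (2^k) := ⟨pow_ne_zero _ two_ne_zero⟩
  set G := (ZMod (2^k))ˣ
  have hco : Nat.Coprime 5 (2^k) := Nat.Coprime.pow_right _ (by decide)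
  set u5 : G := ZMod.unitOfCoprime 5 hco with hu5
  have hu5coe : (u5 : ZMod (2^k)) = 5 := by
    rw [hu5, ZMod.coe_unitOfCoprime]; push_cast; ring
  have hordu5 : orderOf u5 = 2^(k-2) := by
    rw [← orderOf_units, hu5coe, orderOf_five k hk]
  set N : Subgroup G := Subgroup.zpowers (-1 : G) with hN
  haveI hNnormal : N.Normal := ⟨fun a ha g => by rwa [mul_comm, inv_mul_cancel_left]⟩
  have hmemN : ∀ a : G, a ∈ N ↔ a = 1 ∨ a = -1 := by
    intro a
    constructor
    · rintro ⟨z, hz⟩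
      simp only [] at hz
      have hsq : ((-1:G))^(2:ℤ) = 1 := by
        rw [zpow_two, neg_mul_neg, one_mul]
      rcases Int.even_or_odd z with ⟨m, hm⟩ | ⟨m, hm⟩
      · left; rw [← hz, hm, ← two_mul, zpow_mul, hsq, one_zpow]
      · right; rw [← hz, hm, zpow_add, zpow_mul, hsq, one_zpow, one_mul, zpow_one]
    · rintro (rfl | rfl)
      · exact ⟨0, by norm_num⟩
      · exact Subgroup.mem_zpowers _
  have hne11 : (-1 : G) ≠ 1 := by
    intro h
    have := congrArg (Units.val) h
    rw [Units.val_neg, Units.val_one] at this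
    have h2 : ((2:ℕ) : ZMod (2^k)) = 0 := by
      push_cast
      linear_combination -this
    rw [ZMod.natCast_eq_zero_iff] at h2
    have := Nat.le_of_dvd (by norm_num) h2
    have := Nat.pow_le_pow_right (show 1 ≤ 2 by norm_num) hk
    omega
  have hcardN : Nat.card N = 2 := by
    rw [hN, Nat.card_zpowers]
    refine orderOf_eq_prime ?_ hne11
    exact neg_one_sq
  have hcardG : Nat.card G = 2^(k-1) := by
    rw [Nat.card_eq_fintype_card, ZMod.card_units_eq_totient,
      Nat.totient_prime_pow Nat.prime_two (by omega)]
    simp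
  have hcardQ : Nat.card (G ⧸ N) = 2^(k-2) := by
    have := Subgroup.card_eq_card_quotient_mul_card_subgroup N
    rw [hcardG, hcardN] at this
    have h2 : (2:ℕ)^(k-1) = 2^(k-2) * 2 := by
      rw [← pow_succ]; congr 1; omega
    rw [h2] at this
    exact (Nat.eq_of_mul_eq_mul_right (by norm_num) this.symm)
  set q : G →* G ⧸ N := QuotientGroup.mk' N with hq
  have hordq5 : orderOf (q u5) = 2^(k-2) := by
    refine Nat.dvd_antisymm (hordu5 ▸ orderOf_map_dvd q u5) ?_
    rw [← hordu5]
    have hmem : u5 ^ orderOf (q u5) ∈ N := by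
      rw [← QuotientGroup.eq_one_iff]
      have h0 := pow_orderOf_eq_one (q u5)
      rw [← map_pow, hq, QuotientGroup.mk'_apply] at h0
      exact h0
    rcases (hmemN _).mp hmem with h | h
    · exact orderOf_dvd_of_pow_eq_one h
    · exfalso
      have := congrArg (Units.val) h
      rw [Units.val_pow_eq_pow_val, hu5coe, Units.val_neg, Units.val_one] at this
      exact five_pow_ne_neg_one k hk _ this
  haveI : IsCyclic (G ⧸ N) := isCyclic_of_orderOf_eq_card (q u5) (by rw [hordq5, hcardQ])
  have e : Multiplicative (ZMod (2^(k-2))) ≃* G ⧸ N := hcardQ ▸ zmodCyclicMulEquiv ‹IsCyclic (G ⧸ N)›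
  refine ⟨(e.symm.toMonoidHom).comp q, ?_, ?_⟩
  · exact e.symm.surjective.comp (QuotientGroup.mk'_surjective N)
  · intro a
    rw [← hmemN a]
    simp only [MonoidHom.comp_apply, MulEquiv.coe_toMonoidHom]
    rw [MulEquiv.map_eq_one_iff, hq, QuotientGroup.mk'_apply, QuotientGroup.eq_one_iff]

end Stmt2Aux

namespace Stmt2Aux
open DihedralGroup

variable {n : ℕ}

def rpart : DihedralGroup n → ZMod n
  | .r i => i
  | .sr i => i

@[simp] lemma rpart_r (i : ZMod n) : rpart (r i) = i := rfl
@[simp] lemma rpart_sr (i : ZMod n) : rpart (sr i) = i := rfl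

def dmap (a b : ZMod n) : DihedralGroup n → DihedralGroup n
  | .r i => r (a * i)
  | .sr i => sr (b + a * i)

@[simp] lemma dmap_r (a b i : ZMod n) : dmap a b (r i) = r (a * i) := rfl
@[simp] lemma dmap_sr (a b i : ZMod n) : dmap a b (sr i) = sr (b + a * i) := rfl

lemma dmap_comp (a b a' b' : ZMod n) (x : DihedralGroup n) :
    dmap a b (dmap a' b' x) = dmap (a*a') (b + a*b') x := by
  cases x <;> simp only [dmap_r, dmap_sr] <;> (congr 1; ring)

lemma dmap_one (x : DihedralGroup n) : dmap 1 0 x = x := by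
  cases x <;> simp [dmap]

def dAut (a : (ZMod n)ˣ) (b : ZMod n) : MulAut (DihedralGroup n) where
  toFun := dmap (a : ZMod n) b
  invFun := dmap ((a⁻¹ : (ZMod n)ˣ) : ZMod n) (-(((a⁻¹ : (ZMod n)ˣ) : ZMod n) * b))
  left_inv x := by
    rw [dmap_comp]
    have h1 : ((a⁻¹ : (ZMod n)ˣ) : ZMod n) * (a : ZMod n) = 1 := by
      rw [← Units.val_mul, inv_mul_cancel, Units.val_one]
    have h2 : -(((a⁻¹ : (ZMod n)ˣ) : ZMod n) * b) + ((a⁻¹ : (ZMod n)ˣ) : ZMod n) * b = 0 := by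
      ring
    rw [h1, h2]
    exact dmap_one x
  right_inv x := by
    rw [dmap_comp]
    have h1 : (a : ZMod n) * ((a⁻¹ : (ZMod n)ˣ) : ZMod n) = 1 := by
      rw [← Units.val_mul, mul_inv_cancel, Units.val_one]
    have h2 : b + (a : ZMod n) * -(((a⁻¹ : (ZMod n)ˣ) : ZMod n) * b) = 0 := by
      linear_combination -b * h1
    rw [h1, h2]
    exact dmap_one x
  map_mul' x y := by
    cases x <;> cases y <;>
      simp only [r_mul_r, r_mul_sr, sr_mul_r, sr_mul_sr, dmap_r, dmap_sr] <;>
      (congr 1; ring)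

@[simp] lemma dAut_apply (a : (ZMod n)ˣ) (b : ZMod n) (x : DihedralGroup n) :
    dAut a b x = dmap (a : ZMod n) b x := rfl

lemma dAut_mul (a a' : (ZMod n)ˣ) (b b' : ZMod n) :
    dAut a b * dAut a' b' = dAut (a*a') (b + (a : ZMod n) * b') := by
  refine MulEquiv.ext fun x => ?_
  rw [MulAut.mul_apply, dAut_apply, dAut_apply, dAut_apply, dmap_comp, Units.val_mul]

lemma r_pow (j : ZMod n) (m : ℕ) : (r j)^m = r ((m : ZMod n) * j) := by
  induction m with
  | zero => rw [pow_zero, one_def]; congr 1; push_cast; ring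
  | succ m ih => rw [pow_succ, ih, r_mul_r]; congr 1; push_cast; ring

lemma r_inv (j : ZMod n) : (r j)⁻¹ = r (-j) :=
  inv_eq_of_mul_eq_one_right (by rw [r_mul_r, add_neg_cancel, one_def])

noncomputable def aU (f : MulAut (DihedralGroup n)) : (ZMod n)ˣ :=
  @dite _ (IsUnit (rpart (f (r 1)))) (Classical.propDecidable _) (fun h => h.unit) (fun _ => 1)

lemma aU_eq {f : MulAut (DihedralGroup n)} {u : (ZMod n)ˣ}
    (h : rpart (f (r 1)) = (u : ZMod n)) : aU f = u := by
  have hu : IsUnit (rpart (f (r 1))) := h ▸ u.isUnit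
  rw [aU, dif_pos hu]
  exact Units.ext (by rw [IsUnit.unit_spec, h])

@[simp] lemma aU_dAut (a : (ZMod n)ˣ) (b : ZMod n) : aU (dAut a b) = a :=
  aU_eq (by rw [dAut_apply, dmap_r, rpart_r, mul_one])

@[simp] lemma rpart_dAut_sr0 (a : (ZMod n)ˣ) (b : ZMod n) :
    rpart (dAut a b (sr 0)) = b := by
  rw [dAut_apply, dmap_sr, rpart_sr, mul_zero, add_zero]

lemma conj_r (j : ZMod n) : MulAut.conj (r j) = dAut 1 (-(2*j)) := by
  refine MulEquiv.ext fun x => ?_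
  cases x with
  | r i =>
    rw [MulAut.conj_apply, dAut_apply, r_inv, r_mul_r, r_mul_r, dmap_r, Units.val_one, one_mul]
    congr 1; ring
  | sr i =>
    rw [MulAut.conj_apply, dAut_apply, r_inv, r_mul_sr, sr_mul_r, dmap_sr, Units.val_one, one_mul]
    congr 1; ring

lemma sr_inv (j : ZMod n) : (sr j)⁻¹ = sr j :=
  inv_eq_of_mul_eq_one_right (sr_mul_self j)

lemma conj_sr (j : ZMod n) : MulAut.conj (sr j) = dAut (-1) (2*j) := by
  refine MulEquiv.ext fun x => ?_
  cases x with
  | r i =>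
    rw [MulAut.conj_apply, dAut_apply, sr_inv, sr_mul_r, sr_mul_sr, dmap_r,
      Units.val_neg, Units.val_one]
    congr 1; ring
  | sr i =>
    rw [MulAut.conj_apply, dAut_apply, sr_inv, sr_mul_sr, r_mul_sr, dmap_sr,
      Units.val_neg, Units.val_one]
    congr 1; ring

lemma exists_dAut [NeZero n] (hn2 : ¬ (n ∣ 2)) (f : MulAut (DihedralGroup n)) :
    ∃ (a : (ZMod n)ˣ) (b : ZMod n), f = dAut a b := by
  have hord : orderOf (f (r 1)) = n := by
    have := orderOf_injective f.toMonoidHom f.injective (r 1)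
    simpa using this
  obtain ⟨a, ha⟩ : ∃ a, f (r 1) = r a := by
    rcases hfr : f (r 1) with a | j
    · exact ⟨a, rfl⟩
    · exfalso
      rw [hfr, orderOf_sr] at hord
      exact hn2 (hord ▸ dvd_refl 2)
  have haunit : IsUnit a := by
    rw [ha, orderOf_r] at hord
    have hg : Nat.gcd n a.val = 1 := (Nat.div_eq_self.mp hord).resolve_left (NeZero.ne n)
    have hco : Nat.Coprime a.val n := (Nat.coprime_comm).mp hg
    have := (ZMod.isUnit_iff_coprime a.val n).mpr hco
    rwa [ZMod.natCast_val, ZMod.cast_id] at this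
  obtain ⟨b, hb⟩ : ∃ b, f (sr 0) = sr b := by
    rcases hfs : f (sr 0) with j | b
    · exfalso
      have hcomm : f (r 1 * sr 0) = f (sr 0 * r 1) := by
        rw [map_mul, map_mul, ha, hfs, r_mul_r, r_mul_r, add_comm]
      have heq := f.injective hcomm
      rw [r_mul_sr, sr_mul_r] at heq
      have h1 : (0 - 1 : ZMod n) = 0 + 1 := by injection heq
      have h2 : ((2:ℕ) : ZMod n) = 0 := by push_cast; linear_combination -h1
      rw [ZMod.natCast_eq_zero_iff] at h2
      exact hn2 h2
    · exact ⟨b, rfl⟩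
  have hfr : ∀ i : ZMod n, f (r i) = r (a * i) := by
    intro i
    have hri : (r i : DihedralGroup n) = (r 1)^(i.val) := by
      rw [r_one_pow, ZMod.natCast_val, ZMod.cast_id]
    rw [hri, map_pow, ha, r_pow]
    congr 1
    rw [ZMod.natCast_val, ZMod.cast_id]; ring
  have hfs : ∀ i : ZMod n, f (sr i) = sr (b + a * i) := by
    intro i
    have hsi : (sr i : DihedralGroup n) = sr 0 * r i := by rw [sr_mul_r, zero_add]
    rw [hsi, map_mul, hb, hfr, sr_mul_r]
  refine ⟨haunit.unit, b, MulEquiv.ext fun x => ?_⟩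
  cases x with
  | r i => rw [hfr i, dAut_apply, dmap_r, IsUnit.unit_spec]
  | sr i => rw [hfs i, dAut_apply, dmap_sr, IsUnit.unit_spec]

end Stmt2Aux
open Stmt2Aux DihedralGroup in
/-- Let `D` be a dihedral group of order `2^(k+1)` with `k ≥ 2`.  Then the outer
automorphism group `Out(D) = Aut(D)/Inn(D)` is isomorphic to `C₂ × C_{2^(k-2)}`.
(Formulated via the first isomorphism theorem: there is a surjective homomorphism
from `Aut(D)` onto `C₂ × C_{2^(k-2)}` whose kernel is the group of inner
automorphisms.) -/
theorem stmt_2 (k : ℕ) (hk : 2 ≤ k) :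
    ∃ φ : MulAut (DihedralGroup (2 ^ k)) →*
        Multiplicative (ZMod 2) × Multiplicative (ZMod (2 ^ (k - 2))),
      Function.Surjective φ ∧
        φ.ker = (MulAut.conj : DihedralGroup (2 ^ k) →* MulAut (DihedralGroup (2 ^ k))).range := by
  haveI : NeZero (2^k) := ⟨pow_ne_zero _ two_ne_zero⟩
  have h4 : 4 ≤ 2^k := by
    calc (4:ℕ) = 2^2 := by norm_num
    _ ≤ 2^k := Nat.pow_le_pow_right (by norm_num) hk
  have hn2 : ¬ ((2:ℕ)^k ∣ 2) := fun h => by have := Nat.le_of_dvd (by norm_num) h; omega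
  obtain ⟨ψ, hψsurj, hψker⟩ := Stmt2Aux.exists_psi k hk
  have h2dvd : (2:ℕ) ∣ 2^k := dvd_pow_self 2 (by omega)
  set c2 : ZMod (2^k) →+* ZMod 2 := ZMod.castHom h2dvd (ZMod 2) with hc2def
  set Φ : MulAut (DihedralGroup (2^k)) →
      Multiplicative (ZMod 2) × Multiplicative (ZMod (2^(k-2))) :=
    fun f => (Multiplicative.ofAdd (c2 (rpart (f (sr 0)))), ψ (aU f)) with hΦdef
  have key : ∀ (a : (ZMod (2^k))ˣ) (b : ZMod (2^k)),
      Φ (dAut a b) = (Multiplicative.ofAdd (c2 b), ψ a) := by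
    intro a b
    rw [hΦdef]
    simp only [rpart_dAut_sr0, aU_dAut]
  have hc2u : ∀ u : (ZMod (2^k))ˣ, c2 ((u : ZMod (2^k))) = 1 := by
    intro u
    obtain ⟨v, hv⟩ := (u.isUnit).map c2
    have hv1 : ∀ w : (ZMod 2)ˣ, w = 1 := by decide
    rw [← hv, hv1 v, Units.val_one]
  have hmul : ∀ f g : MulAut (DihedralGroup (2^k)), Φ (f * g) = Φ f * Φ g := by
    intro f g
    obtain ⟨a, b, rfl⟩ := exists_dAut hn2 f
    obtain ⟨a', b', rfl⟩ := exists_dAut hn2 g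
    rw [dAut_mul, key, key, key]
    have h1 : c2 (b + (a : ZMod (2^k)) * b') = c2 b + c2 b' := by
      rw [map_add, map_mul, hc2u, one_mul]
    rw [h1, map_mul, Prod.mk_mul_mk, ofAdd_add]
  refine ⟨MonoidHom.mk' Φ hmul, ?_, ?_⟩
  · rintro ⟨x, y⟩
    obtain ⟨u, hu⟩ := hψsurj y
    refine ⟨dAut u (((Multiplicative.toAdd x).val : ℕ) : ZMod (2^k)), ?_⟩
    show Φ _ = _
    rw [key]
    have h1 : c2 (((Multiplicative.toAdd x).val : ℕ) : ZMod (2^k)) = Multiplicative.toAdd x := by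
      rw [map_natCast]
      exact ZMod.natCast_rightInverse _
    rw [h1, hu]
    rfl
  · ext f
    rw [MonoidHom.mem_ker, MonoidHom.mem_range]
    obtain ⟨a, b, rfl⟩ := exists_dAut hn2 f
    have hconj1 : ∀ x : DihedralGroup (2^k), Φ (MulAut.conj x) = 1 := by
      intro x
      cases x with
      | r j =>
        rw [conj_r, key]
        have h1 : c2 (-(2*j)) = 0 := by
          rw [map_neg, map_mul]
          have : c2 2 = 0 := by
            rw [show ((2:ZMod (2^k))) = ((2:ℕ) : ZMod (2^k)) by push_cast; ring, map_natCast]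
            decide
          rw [this, zero_mul, neg_zero]
        rw [h1, map_one]
        rfl
      | sr j =>
        rw [conj_sr, key]
        have h1 : c2 (2*j) = 0 := by
          rw [map_mul]
          have : c2 2 = 0 := by
            rw [show ((2:ZMod (2^k))) = ((2:ℕ) : ZMod (2^k)) by push_cast; ring, map_natCast]
            decide
          rw [this, zero_mul]
        have h2 : ψ (-1) = 1 := (hψker (-1)).mpr (Or.inr rfl)
        rw [h1, h2]
        rfl
    constructor
    · intro h
      have h' : Φ (dAut a b) = 1 := h
      rw [key, Prod.mk_eq_one] at h'
      obtain ⟨h1, h2⟩ := h'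
      rw [ofAdd_eq_one] at h1
      have hval : ((b.val : ℕ) : ZMod 2) = 0 := by
        rw [ZMod.natCast_val, ← ZMod.castHom_apply (h := h2dvd)]
        exact h1
      obtain ⟨m, hm⟩ := (ZMod.natCast_eq_zero_iff _ 2).mp hval
      have hb : b = 2 * ((m : ℕ) : ZMod (2^k)) := by
        have hbv : ((b.val : ℕ) : ZMod (2^k)) = b := by rw [ZMod.natCast_val, ZMod.cast_id]
        rw [← hbv, hm]; push_cast; ring
      rcases (hψker a).mp h2 with rfl | rfl
      · refine ⟨r (-((m : ℕ) : ZMod (2^k))), ?_⟩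
        rw [conj_r, hb]
        congr 1
        ring
      · exact ⟨sr ((m : ℕ) : ZMod (2^k)), by rw [conj_sr, hb]⟩
    · rintro ⟨x, hx⟩
      show Φ _ = 1
      rw [← hx]
      exact hconj1 x
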